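/- Let Ω ⊆ ℝⁿ be a nonempty closed convex set, F : ℝⁿ → ℝⁿ continuous and monotone on Ω, and φ convex, finite and continuous on Ω. If there exists ε̄ > 0 such that S₀ ∩ S_{G_{ε̄}φ} ≠ ∅, then S_{Gεφ} ⊆ S₀ for all ε ∈ (0, ε̄). If moreover F is coercive with respect to Ω, then S_{Gεφ} is bounded for all ε ∈ (0, ε̄). -/
import Mathlib


open Set
open scoped InnerProductSpace

/-- The dual gap function `G(x) = sup_{y ∈ Ω} ⟨F(y), x − y⟩`, valued in `EReal`. -/
noncomputable def dualGap {n : ℕ} (Ω : Set (EuclideanSpace ℝ (Fin n)))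
    (F : EuclideanSpace ℝ (Fin n) → EuclideanSpace ℝ (Fin n))
    (x : EuclideanSpace ℝ (Fin n)) : EReal :=
  ⨆ y ∈ Ω, ((⟪F y, x - y⟫_ℝ : ℝ) : EReal)

lemma dualGap_nonneg_aux {n : ℕ} (Ω : Set (EuclideanSpace ℝ (Fin n)))
    (F : EuclideanSpace ℝ (Fin n) → EuclideanSpace ℝ (Fin n))
    (x : EuclideanSpace ℝ (Fin n)) (hx : x ∈ Ω) : 0 ≤ dualGap Ω F x := by
  have : ((⟪F x, x - x⟫_ℝ : ℝ) : EReal) ≤ dualGap Ω F x := le_iSup₂_of_le x hx le_rfl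
  simpa using this

lemma dualGap_sol_nonpos_aux {n : ℕ} (Ω : Set (EuclideanSpace ℝ (Fin n)))
    (F : EuclideanSpace ℝ (Fin n) → EuclideanSpace ℝ (Fin n))
    (hFmono : ∀ x ∈ Ω, ∀ y ∈ Ω, 0 ≤ ⟪F x - F y, x - y⟫_ℝ)
    (x : EuclideanSpace ℝ (Fin n)) (hx : x ∈ Ω)
    (hsol : ∀ y ∈ Ω, 0 ≤ ⟪F x, y - x⟫_ℝ) : dualGap Ω F x ≤ 0 := by
  refine iSup₂_le fun y hy => ?_
  have h1 := hFmono x hx y hy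
  have h2 := hsol y hy
  rw [inner_sub_left] at h1
  have h3 : ⟪F x, y - x⟫_ℝ = - ⟪F x, x - y⟫_ℝ := by rw [← inner_neg_right]; congr 1; abel
  have : ⟪F y, x - y⟫_ℝ ≤ 0 := by linarith
  exact_mod_cast EReal.coe_nonpos.2 this

lemma minty_aux {n : ℕ} (Ω : Set (EuclideanSpace ℝ (Fin n))) (hconv : Convex ℝ Ω)
    (F : EuclideanSpace ℝ (Fin n) → EuclideanSpace ℝ (Fin n))
    (hFcont : ContinuousOn F Ω)
    (x : EuclideanSpace ℝ (Fin n)) (hx : x ∈ Ω)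
    (hgap : ∀ y ∈ Ω, ⟪F y, x - y⟫_ℝ ≤ 0) :
    ∀ z ∈ Ω, 0 ≤ ⟪F x, z - x⟫_ℝ := by
  intro z hz
  set p : ℝ → EuclideanSpace ℝ (Fin n) := fun t => x + t • (z - x) with hp
  have hpmem : ∀ t ∈ Icc (0:ℝ) 1, p t ∈ Ω := by
    intro t ht
    have : p t = (1 - t) • x + t • z := by simp only [hp]; module
    rw [this]
    exact hconv hx hz (by linarith [ht.1, ht.2]) ht.1 (by ring)
  set f : ℝ → ℝ := fun t => ⟪F (p t), z - x⟫_ℝ with hf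
  have hcw : ContinuousWithinAt f (Ioc (0:ℝ) 1) 0 := by
    have hpc : Continuous p := by
      apply continuous_const.add (continuous_id.smul continuous_const)
    have hp0 : p 0 = x := by simp [hp]
    have h1 : ContinuousWithinAt F Ω (p 0) := hp0 ▸ hFcont.continuousWithinAt hx
    have h2 : ContinuousWithinAt (fun t => F (p t)) (Ioc (0:ℝ) 1) 0 :=
      h1.comp hpc.continuousWithinAt (fun t ht => hpmem t (Ioc_subset_Icc_self ht))
    exact h2.inner continuousWithinAt_const
  have hneb : (nhdsWithin (0:ℝ) (Ioc 0 1)).NeBot :=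
    left_nhdsWithin_Ioc_neBot (by norm_num)
  have hnonneg : ∀ t ∈ Ioc (0:ℝ) 1, 0 ≤ f t := by
    intro t ht
    have h := hgap (p t) (hpmem t (Ioc_subset_Icc_self ht))
    have hx_eq : x - p t = (-t) • (z - x) := by simp only [hp]; module
    rw [hx_eq, inner_smul_right] at h
    have : 0 ≤ t * ⟪F (p t), z - x⟫_ℝ := by nlinarith
    exact nonneg_of_mul_nonneg_right this ht.1
  have hf0 : f 0 = ⟪F x, z - x⟫_ℝ := by simp [hf, hp]
  have := ge_of_tendsto hcw.tendsto
    (eventually_nhdsWithin_of_forall hnonneg)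
  rw [hf0] at this
  exact this

/-- if S₀ ∩ S_{G_{ε̄}φ} ≠ ∅ for some ε̄ > 0, then S_{Gεφ} ⊆ S₀ for
all ε ∈ (0, ε̄); if moreover F is coercive with respect to Ω, then S_{Gεφ} is
bounded for all ε ∈ (0, ε̄). -/
theorem exact_regularization_of_dual_gap {n : ℕ}
    (Ω : Set (EuclideanSpace ℝ (Fin n)))
    (hne : Ω.Nonempty) (hcl : IsClosed Ω) (hconv : Convex ℝ Ω)
    (F : EuclideanSpace ℝ (Fin n) → EuclideanSpace ℝ (Fin n))
    (hFcont : ContinuousOn F Ω)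
    (hFmono : ∀ x ∈ Ω, ∀ y ∈ Ω, 0 ≤ ⟪F x - F y, x - y⟫_ℝ)
    (φ : EuclideanSpace ℝ (Fin n) → ℝ)
    (hφconv : ConvexOn ℝ Ω φ) (hφcont : ContinuousOn φ Ω)
    (εbar : ℝ) (hεbar : 0 < εbar)
    -- S₀ ∩ S_{G_{ε̄}φ} ≠ ∅
    (hexact : ∃ x, (x ∈ Ω ∧ ∀ y ∈ Ω, 0 ≤ ⟪F x, y - x⟫_ℝ) ∧
      x ∈ Ω ∧ ∀ z ∈ Ω, dualGap Ω F x + ((εbar * φ x : ℝ) : EReal) ≤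
        dualGap Ω F z + ((εbar * φ z : ℝ) : EReal)) :
    (∀ ε : ℝ, 0 < ε → ε < εbar →
      {x | x ∈ Ω ∧ ∀ z ∈ Ω, dualGap Ω F x + ((ε * φ x : ℝ) : EReal) ≤
          dualGap Ω F z + ((ε * φ z : ℝ) : EReal)} ⊆
        {x | x ∈ Ω ∧ ∀ y ∈ Ω, 0 ≤ ⟪F x, y - x⟫_ℝ}) ∧
    ((∃ γ : ℝ, 0 < γ ∧ ∀ x₀ ∈ Ω, ∃ c : ℝ, 0 < c ∧ ∃ R : ℝ,
        ∀ x ∈ Ω, R ≤ ‖x‖ → c ≤ ⟪F x, x - x₀⟫_ℝ / ‖x‖ ^ γ) →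
      ∀ ε : ℝ, 0 < ε → ε < εbar →
        Bornology.IsBounded
          {x | x ∈ Ω ∧ ∀ z ∈ Ω, dualGap Ω F x + ((ε * φ x : ℝ) : EReal) ≤
            dualGap Ω F z + ((ε * φ z : ℝ) : EReal)}) := by
  obtain ⟨xb, ⟨hxbΩ, hxbsol⟩, -, hxbmin⟩ := hexact
  have hGxb_zero : dualGap Ω F xb = 0 :=
    le_antisymm (dualGap_sol_nonpos_aux Ω F hFmono xb hxbΩ hxbsol)
      (dualGap_nonneg_aux Ω F xb hxbΩ)
  have main : ∀ ε : ℝ, 0 < ε → ε < εbar →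
      {x | x ∈ Ω ∧ ∀ z ∈ Ω, dualGap Ω F x + ((ε * φ x : ℝ) : EReal) ≤
          dualGap Ω F z + ((ε * φ z : ℝ) : EReal)} ⊆
        {x | x ∈ Ω ∧ ∀ y ∈ Ω, 0 ≤ ⟪F x, y - x⟫_ℝ} := by
    intro ε hε hεlt x hxmem
    obtain ⟨hxΩ, hxmin⟩ := hxmem
    have hGx_nonneg : 0 ≤ dualGap Ω F x := dualGap_nonneg_aux Ω F x hxΩ
    -- G x is finite
    have h1 : dualGap Ω F x + ((ε * φ x : ℝ) : EReal) ≤ ((ε * φ xb : ℝ) : EReal) := by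
      have := hxmin xb hxbΩ
      rwa [hGxb_zero, zero_add] at this
    have hGx_ne_top : dualGap Ω F x ≠ ⊤ := by
      intro h
      rw [h, EReal.top_add_coe] at h1
      exact (EReal.coe_lt_top _).not_ge h1
    have hGx_ne_bot : dualGap Ω F x ≠ ⊥ := fun h => by simp [h] at hGx_nonneg
    set g : ℝ := (dualGap Ω F x).toReal with hg
    have hGx_eq : dualGap Ω F x = (g : EReal) := (EReal.coe_toReal hGx_ne_top hGx_ne_bot).symm
    have hg_nonneg : 0 ≤ g := by
      rw [hGx_eq] at hGx_nonneg; exact_mod_cast hGx_nonneg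
    -- real inequalities
    have hr1 : g + ε * φ x ≤ ε * φ xb := by
      rw [hGx_eq, ← EReal.coe_add] at h1; exact_mod_cast h1
    have h2 : ((εbar * φ xb : ℝ) : EReal) ≤ ((g + εbar * φ x : ℝ) : EReal) := by
      have := hxbmin x hxΩ
      rw [hGxb_zero, zero_add, hGx_eq, ← EReal.coe_add] at this
      exact_mod_cast this
    have hr2 : εbar * φ xb ≤ g + εbar * φ x := by exact_mod_cast h2
    -- deduce g = 0
    have hd : φ xb - φ x ≤ 0 := by nlinarith
    have hg_zero : g = 0 := by nlinarith
    have hGx_zero : dualGap Ω F x = 0 := by rw [hGx_eq, hg_zero]; rfl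
    have hgap : ∀ y ∈ Ω, ⟪F y, x - y⟫_ℝ ≤ 0 := by
      intro y hy
      have : ((⟪F y, x - y⟫_ℝ : ℝ) : EReal) ≤ dualGap Ω F x := le_iSup₂_of_le y hy le_rfl
      rw [hGx_zero] at this
      exact_mod_cast EReal.coe_nonpos.1 (by exact_mod_cast this)
    exact ⟨hxΩ, minty_aux Ω hconv F hFcont x hxΩ hgap⟩
  refine ⟨main, ?_⟩
  rintro ⟨γ, hγ, hcoer⟩ ε hε hεlt
  obtain ⟨c, hc, R, hR⟩ := hcoer xb hxbΩ
  apply (Metric.isBounded_closedBall (x := (0 : EuclideanSpace ℝ (Fin n)))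
    (r := max R 1)).subset
  intro x hxmem
  have hxsol := main ε hε hεlt hxmem
  obtain ⟨hxΩ, hsol⟩ := hxsol
  simp only [Metric.mem_closedBall, dist_zero_right]
  by_contra hbig
  push_neg at hbig
  have hxnorm : max R 1 ≤ ‖x‖ := hbig.le
  have hnormR : R ≤ ‖x‖ := le_trans (le_max_left _ _) hxnorm
  have hnorm1 : (1:ℝ) ≤ ‖x‖ := le_trans (le_max_right _ _) hxnorm
  have h := hR x hxΩ hnormR
  have hpos : 0 < ‖x‖ ^ γ := Real.rpow_pos_of_pos (by linarith) γ
  have hnum : ⟪F x, x - xb⟫_ℝ ≤ 0 := by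
    have h1 := hsol xb hxbΩ
    have : ⟪F x, x - xb⟫_ℝ = - ⟪F x, xb - x⟫_ℝ := by rw [← inner_neg_right]; congr 1; abel
    rw [this]; linarith
  have : ⟪F x, x - xb⟫_ℝ / ‖x‖ ^ γ ≤ 0 := div_nonpos_of_nonpos_of_nonneg hnum hpos.le
  linarith
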